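/- Let S be a polynomial mapping scheme with two forward-invariant sets Ω₁, Ω₂ ⊆ Z \ C that are disjoint, with p_i = #(α⁻¹(Ω_i) \ Ω_i) and p₁ ≤ p₂. Then Ω₁ satisfies #(α⁻¹(Ω₁) \ Ω₁) ≤ Σ_{z ∈ C \ {∞}, α(z) ∉ Ω₁} (ν(z) − 1). -/
import Mathlib


/-- A polynomial mapping scheme of degree `d`: `Z = C ∪ P` finite, `α : Z → P` surjective,
`ν : Z → ℕ` with `ν⁻¹({n ≥ 2}) = C`, satisfying Riemann-Hurwitz, the local degree
conditions, and having a fixed point `∞ ∈ C` with `ν ∞ = d`. -/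
structure PolyMapScheme (Z : Type*) [Fintype Z] [DecidableEq Z] where
  C : Finset Z
  P : Finset Z
  α : Z → Z
  ν : Z → ℕ
  d : ℕ
  union_eq : C ∪ P = Finset.univ
  maps_to_P : ∀ z, α z ∈ P
  surj : ∀ p ∈ P, ∃ z, α z = p
  crit_iff : ∀ z, 2 ≤ ν z ↔ z ∈ C
  nu_pos : ∀ z, 1 ≤ ν z
  d_pos : 1 ≤ d
  riemann_hurwitz : ∑ z, (ν z - 1) = 2 * (d - 1)
  local_deg : ∀ z, ∑ x ∈ Finset.univ.filter (fun x => α x = z), ν x ≤ d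
  infty : Z
  infty_crit : infty ∈ C
  infty_fixed : α infty = infty
  nu_infty : ν infty = d

/-- If `Ω₁, Ω₂ ⊆ Z \ C` are disjoint forward-invariant sets (`α(Ωᵢ) = Ωᵢ`) with
`p₁ = #(α⁻¹(Ω₁) \ Ω₁) ≤ p₂ = #(α⁻¹(Ω₂) \ Ω₂)`, then
`#(α⁻¹(Ω₁) \ Ω₁) ≤ Σ_{z ∈ C \ {∞}, α(z) ∉ Ω₁} (ν(z) − 1)`. -/
theorem stmt_17 {Z : Type*} [Fintype Z] [DecidableEq Z] (S : PolyMapScheme Z)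
    (Ω₁ Ω₂ : Finset Z)
    (hΩ₁C : ∀ z ∈ Ω₁, z ∉ S.C) (hΩ₂C : ∀ z ∈ Ω₂, z ∉ S.C)
    (hdisj : Disjoint Ω₁ Ω₂)
    (hinv₁ : Finset.image S.α Ω₁ = Ω₁) (hinv₂ : Finset.image S.α Ω₂ = Ω₂)
    (hp : (Finset.univ.filter (fun z => S.α z ∈ Ω₁ ∧ z ∉ Ω₁)).card ≤
      (Finset.univ.filter (fun z => S.α z ∈ Ω₂ ∧ z ∉ Ω₂)).card) :
    (Finset.univ.filter (fun z => S.α z ∈ Ω₁ ∧ z ∉ Ω₁)).card ≤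
      ∑ z ∈ (S.C.erase S.infty).filter (fun z => S.α z ∉ Ω₁), (S.ν z - 1) := by
  classical
  -- For a forward-invariant Ω, #(α⁻¹Ω \ Ω) + |Ω| = #(α⁻¹Ω)
  have key : ∀ Ω : Finset Z, Finset.image S.α Ω = Ω →
      (Finset.univ.filter (fun z => S.α z ∈ Ω ∧ z ∉ Ω)).card + Ω.card
        = (Finset.univ.filter (fun z => S.α z ∈ Ω)).card := by
    intro Ω hinv
    have hmaps : ∀ x ∈ Ω, S.α x ∈ Ω := fun x hx =>
      hinv ▸ Finset.mem_image_of_mem S.α hx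
    have hset : Finset.univ.filter (fun z => S.α z ∈ Ω)
        = (Finset.univ.filter (fun z => S.α z ∈ Ω ∧ z ∉ Ω)) ∪ Ω := by
      ext z
      simp only [Finset.mem_filter, Finset.mem_union, Finset.mem_univ, true_and]
      constructor
      · intro h
        by_cases hz : z ∈ Ω
        · exact Or.inr hz
        · exact Or.inl ⟨h, hz⟩
      · rintro (⟨h, _⟩ | hz)
        · exact h
        · exact hmaps z hz
    have hdj : Disjoint (Finset.univ.filter (fun z => S.α z ∈ Ω ∧ z ∉ Ω)) Ω := by
      rw [Finset.disjoint_left]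
      intro a ha haΩ
      exact (Finset.mem_filter.1 ha).2.2 haΩ
    rw [hset, Finset.card_union_of_disjoint hdj]
  have hP1 : Ω₁ ⊆ S.P := by
    intro w hw
    obtain ⟨x, -, hx⟩ := Finset.mem_image.1 (hinv₁ ▸ hw)
    exact hx ▸ S.maps_to_P x
  have hP2 : Ω₂ ⊆ S.P := by
    intro w hw
    obtain ⟨x, -, hx⟩ := Finset.mem_image.1 (hinv₂ ▸ hw)
    exact hx ▸ S.maps_to_P x
  have hinftyP : S.infty ∈ S.P := S.infty_fixed ▸ S.maps_to_P S.infty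
  have k1 := key Ω₁ hinv₁
  have k2 := key Ω₂ hinv₂
  -- partition of Z by where α z lands
  have c1 : (Finset.univ.filter (fun z => S.α z ∈ Ω₁)).card
      + (Finset.univ.filter (fun z => ¬ S.α z ∈ Ω₁)).card = Fintype.card Z := by
    rw [Finset.card_filter_add_card_filter_not, Finset.card_univ]
  have c2 : (Finset.univ.filter (fun z => S.α z ∈ Ω₂)).card
      + (Finset.univ.filter (fun z => S.α z ∉ Ω₁ ∧ S.α z ∉ Ω₂)).card
      = (Finset.univ.filter (fun z => ¬ S.α z ∈ Ω₁)).card := by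
    have := Finset.card_filter_add_card_filter_not
      (s := Finset.univ.filter (fun z => ¬ S.α z ∈ Ω₁)) (p := fun z => S.α z ∈ Ω₂)
    rw [Finset.filter_filter, Finset.filter_filter] at this
    have e1 : Finset.univ.filter (fun z => ¬ S.α z ∈ Ω₁ ∧ S.α z ∈ Ω₂)
        = Finset.univ.filter (fun z => S.α z ∈ Ω₂) := by
      ext z
      simp only [Finset.mem_filter, Finset.mem_univ, true_and]
      exact ⟨fun h => h.2, fun h => ⟨Finset.disjoint_right.mp hdisj h, h⟩⟩
    have e2 : Finset.univ.filter (fun z => ¬ S.α z ∈ Ω₁ ∧ ¬ S.α z ∈ Ω₂)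
        = Finset.univ.filter (fun z => S.α z ∉ Ω₁ ∧ S.α z ∉ Ω₂) := rfl
    rw [e1, e2] at this
    exact this
  -- surjectivity: points of P outside Ω₁ ∪ Ω₂ have preimages avoiding Ω₁ and Ω₂
  have csurj : (S.P \ (Ω₁ ∪ Ω₂)).card
      ≤ (Finset.univ.filter (fun z => S.α z ∉ Ω₁ ∧ S.α z ∉ Ω₂)).card := by
    have hsub : S.P \ (Ω₁ ∪ Ω₂) ⊆
        Finset.image S.α (Finset.univ.filter (fun z => S.α z ∉ Ω₁ ∧ S.α z ∉ Ω₂)) := by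
      intro p hp
      rw [Finset.mem_sdiff, Finset.mem_union] at hp
      obtain ⟨z, hz⟩ := S.surj p hp.1
      refine Finset.mem_image.2 ⟨z, ?_, hz⟩
      rw [Finset.mem_filter, hz]
      exact ⟨Finset.mem_univ z, fun h => hp.2 (Or.inl h), fun h => hp.2 (Or.inr h)⟩
    exact (Finset.card_le_card hsub).trans Finset.card_image_le
  have hΩP : Ω₁ ∪ Ω₂ ⊆ S.P := Finset.union_subset hP1 hP2
  have csd : (S.P \ (Ω₁ ∪ Ω₂)).card + (Ω₁ ∪ Ω₂).card = S.P.card :=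
    Finset.card_sdiff_add_card_eq_card hΩP
  have cu : (Ω₁ ∪ Ω₂).card = Ω₁.card + Ω₂.card := Finset.card_union_of_disjoint hdisj
  have cz : S.P.card + (S.C \ S.P).card = Fintype.card Z := by
    have huniv : S.P ∪ (S.C \ S.P) = Finset.univ := by
      rw [Finset.union_sdiff_self_eq_union, Finset.union_comm, S.union_eq]
    rw [← Finset.card_union_of_disjoint Finset.disjoint_sdiff, huniv, Finset.card_univ]
  have csplit : ((S.C \ S.P).filter (fun z => S.α z ∈ Ω₁)).card
      + ((S.C \ S.P).filter (fun z => ¬ S.α z ∈ Ω₁)).card = (S.C \ S.P).card :=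
    Finset.card_filter_add_card_filter_not _
  -- critical points (not values) mapping into Ω₁ are extra preimages of Ω₁
  have ha1 : ((S.C \ S.P).filter (fun z => S.α z ∈ Ω₁)).card
      ≤ (Finset.univ.filter (fun z => S.α z ∈ Ω₁ ∧ z ∉ Ω₁)).card := by
    apply Finset.card_le_card
    intro z hz
    rw [Finset.mem_filter, Finset.mem_sdiff] at hz
    rw [Finset.mem_filter]
    exact ⟨Finset.mem_univ z, hz.2, fun h => hΩ₁C z h hz.1.1⟩
  -- the rest are bounded by the critical weight not mapping into Ω₁
  have hb : ((S.C \ S.P).filter (fun z => ¬ S.α z ∈ Ω₁)).card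
      ≤ ∑ z ∈ (S.C.erase S.infty).filter (fun z => S.α z ∉ Ω₁), (S.ν z - 1) := by
    have step1 : ((S.C \ S.P).filter (fun z => ¬ S.α z ∈ Ω₁)).card
        ≤ ∑ z ∈ (S.C \ S.P).filter (fun z => ¬ S.α z ∈ Ω₁), (S.ν z - 1) := by
      rw [Finset.card_eq_sum_ones]
      apply Finset.sum_le_sum
      intro z hz
      have hzC : z ∈ S.C := (Finset.mem_sdiff.1 (Finset.mem_filter.1 hz).1).1
      have := (S.crit_iff z).2 hzC
      omega
    refine step1.trans (Finset.sum_le_sum_of_subset ?_)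
    intro z hz
    rw [Finset.mem_filter, Finset.mem_sdiff] at hz
    rw [Finset.mem_filter, Finset.mem_erase]
    refine ⟨⟨fun h => hz.1.2 (h ▸ hinftyP), hz.1.1⟩, hz.2⟩
  omega
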